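/- There exists an absolute constant C₀ > 0 such that the following holds. Let E be a real-valued random variable and M > 0 a parameter such that for all α > 0, P(E ≥ αM) ≤ e^{−α²/2} and P(E ≤ −αM) ≤ e^{−α²/2}. Let λ > 0, set Δ = 2λM, and let b(E) be the random variable obtained by rounding E to the nearest integer multiple of Δ. Then the base-2 Shannon entropy of b(E) satisfies H(b(E)) ≤ G(λ), where G(λ) = C₀ e^{−λ²/9} if λ ≥ 10, G(λ) = C₀ if 0.1 < λ < 10, and G(λ) = −C₀ log₂(λ) if λ ≤ 0.1. -/

import Mathlib

open MeasureTheory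


noncomputable section

/-- The base-2 Shannon entropy `H(X) = −Σ_z P(X = z) log₂ P(X = z)` of an
integer-valued random variable `X` on a probability space `(Ω, μ)`. -/
def intEntropy {Ω : Type*} [MeasurableSpace Ω] (μ : Measure Ω) (X : Ω → ℤ) : ℝ :=
  -∑' z : ℤ, (μ (X ⁻¹' {z})).toReal * Real.logb 2 (μ (X ⁻¹' {z})).toReal

section Helpers
open Real


-- L1
lemma negMulLog_le_one_sub {p : ℝ} (h0 : 0 ≤ p) (h1 : p ≤ 1) : negMulLog p ≤ 1 - p := by
  rcases eq_or_lt_of_le h0 with h | h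
  · simp [← h, negMulLog]
  · have h2 := Real.log_le_sub_one_of_pos (x := p⁻¹) (by positivity)
    rw [Real.log_inv] at h2
    have h3 : p * (-Real.log p) ≤ p * (p⁻¹ - 1) := mul_le_mul_of_nonneg_left h2 h0
    have h4 : p * p⁻¹ = 1 := mul_inv_cancel₀ (ne_of_gt h)
    simp only [negMulLog]
    nlinarith

-- L2
lemma negMulLog_le_two_sqrt {p : ℝ} (h0 : 0 ≤ p) : negMulLog p ≤ 2 * Real.sqrt p := by
  rcases eq_or_lt_of_le h0 with h | h
  · simp [← h, negMulLog]
  · have hs : 0 < Real.sqrt p := Real.sqrt_pos.2 h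
    have h1 := Real.log_le_sub_one_of_pos (x := (Real.sqrt p)⁻¹) (by positivity)
    rw [Real.log_inv, Real.log_sqrt h0] at h1
    have h2 : -Real.log p ≤ 2 * (Real.sqrt p)⁻¹ := by linarith
    have h3 : p * (-Real.log p) ≤ p * (2 * (Real.sqrt p)⁻¹) :=
      mul_le_mul_of_nonneg_left h2 h0
    have hp : p * (Real.sqrt p)⁻¹ = Real.sqrt p := by
      rw [← Real.sq_sqrt h0]; field_simp; rw [Real.sqrt_sq hs.le]
    simp only [negMulLog]
    nlinarith
-- L3 Gibbs
lemma negMulLog_le_gibbs {p q : ℝ} (h0 : 0 ≤ p) (hq : 0 < q) :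
    negMulLog p ≤ p * Real.log q⁻¹ + q := by
  rcases eq_or_lt_of_le h0 with h | h
  · simp [← h, negMulLog]; positivity
  · have h1 := Real.log_le_sub_one_of_pos (x := q / p) (by positivity)
    have h2 : p * Real.log (q / p) ≤ p * (q / p - 1) := mul_le_mul_of_nonneg_left h1 h0
    rw [Real.log_div (ne_of_gt hq) (ne_of_gt h)] at h2
    have h4 : p * (q / p) = q := by field_simp
    simp only [negMulLog, Real.log_inv]
    nlinarith

-- L4
lemma hasSum_int_natAbs {f : ℕ → ℝ} {S : ℝ} (hf : HasSum f S) :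
    HasSum (fun z : ℤ => f z.natAbs) (S + (S - f 0)) := by
  have h1 : HasSum (fun n : ℕ => f (n + 1)) (S - f 0) := by
    apply (hasSum_nat_add_iff 1).mpr
    simpa using hf
  have h2 := hf.int_rec h1
  have h3 : (fun z : ℤ => f z.natAbs) = fun z : ℤ => Int.rec f (fun n => f (n + 1)) z := by
    funext z
    cases z <;> rfl
  rw [h3]
  exact h2

lemma seqAB (lam : ℝ) (hl : 0 < lam) (p : ℤ → ℝ)
    (h0 : ∀ z, 0 ≤ p z) (h1 : ∀ z, p z ≤ 1)
    (hp0 : 1 - p 0 ≤ 2 * exp (-lam ^ 2 / 2))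
    (ht : ∀ z : ℤ, z ≠ 0 → p z ≤ exp (-((2 * (z.natAbs : ℝ) - 1) * lam) ^ 2 / 2)) :
    ∑' z : ℤ, negMulLog (p z) ≤
      2 * exp (-lam ^ 2 / 2) + 4 * exp (-lam ^ 2 / 4) / (1 - exp (-lam ^ 2 / 2)) := by
  set r := exp (-lam ^ 2 / 2) with hrdef
  have hr0 : 0 < r := exp_pos _
  have hr1 : r < 1 := by
    rw [hrdef, exp_lt_one_iff]
    nlinarith
  set a := 2 * exp (-lam ^ 2 / 2) with hadef
  set b := 2 * exp (lam ^ 2 / 4) with hbdef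
  have hb0 : 0 < b := by positivity
  set G := fun z : ℤ => (if z = 0 then a - b else 0) + b * r ^ z.natAbs with hGdef
  have hgeo : HasSum (fun n : ℕ => b * r ^ n) (b * (1 - r)⁻¹) := by
    simpa [div_eq_mul_inv] using (hasSum_geometric_of_lt_one hr0.le hr1).mul_left b
  have hZ := hasSum_int_natAbs hgeo
  have hI : HasSum (fun z : ℤ => if z = 0 then a - b else 0) (a - b) := hasSum_ite_eq 0 (a - b)
  have hG : HasSum G ((a - b) + (b * (1 - r)⁻¹ + (b * (1 - r)⁻¹ - b * r ^ (0 : ℕ)))) := hI.add hZ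
  have hbr : b * r = 2 * exp (-lam ^ 2 / 4) := by
    rw [hbdef, hrdef, mul_assoc, ← Real.exp_add]
    ring_nf
  have hterm : ∀ z : ℤ, negMulLog (p z) ≤ G z := by
    intro z
    by_cases hz : z = 0
    · subst hz
      have h2 := negMulLog_le_one_sub (h0 0) (h1 0)
      simp only [hGdef, Int.natAbs_zero, pow_zero, mul_one, if_pos]
      linarith
    · have hn : 1 ≤ z.natAbs := Int.natAbs_pos.mpr hz
      have hn' : (1 : ℝ) ≤ (z.natAbs : ℝ) := by exact_mod_cast hn
      set n := z.natAbs
      have hsq : Real.sqrt (p z) ≤ exp (-((2 * (n : ℝ) - 1) * lam) ^ 2 / 4) := by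
        have := Real.sqrt_le_sqrt (ht z hz)
        refine this.trans_eq ?_
        rw [← Real.exp_half]
        simp only [n]
        ring_nf
      have hexp : exp (-((2 * (n : ℝ) - 1) * lam) ^ 2 / 4) ≤ exp (lam ^ 2 / 4) * r ^ n := by
        rw [hrdef, ← Real.exp_nat_mul, ← Real.exp_add]
        apply Real.exp_le_exp.mpr
        have key : (2 * (n : ℝ) - 1) ≤ (2 * (n : ℝ) - 1) ^ 2 := by nlinarith
        have : (2 * (n : ℝ) - 1) * lam ^ 2 ≤ (2 * (n : ℝ) - 1) ^ 2 * lam ^ 2 :=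
          mul_le_mul_of_nonneg_right key (by positivity)
        nlinarith
      have h2 := (negMulLog_le_two_sqrt (h0 z)).trans
        ((mul_le_mul_of_nonneg_left hsq (by norm_num)).trans
          (mul_le_mul_of_nonneg_left hexp (by norm_num)))
      simp only [hGdef, if_neg hz, zero_add]
      calc negMulLog (p z) ≤ 2 * (exp (lam ^ 2 / 4) * r ^ n) := h2
      _ = b * r ^ n := by rw [hbdef]; ring
  have hF : Summable (fun z : ℤ => negMulLog (p z)) :=
    Summable.of_nonneg_of_le (fun z => negMulLog_nonneg (h0 z) (h1 z)) hterm hG.summable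
  have := Summable.tsum_le_tsum hterm hF hG.summable
  rw [hG.tsum_eq] at this
  refine this.trans ?_
  have h1r : (0:ℝ) < 1 - r := by linarith
  rw [div_eq_mul_inv]
  have heq : a - b + (b * (1 - r)⁻¹ + (b * (1 - r)⁻¹ - b * r ^ (0:ℕ))) = a + 2 * (b * r) * (1 - r)⁻¹ := by
    field_simp
    ring
  rw [heq, hbr]
  ring_nf
  exact le_refl _

lemma gauss_key (nr Nr lam jr : ℝ) (hjc : jr = nr - Nr) (hj1 : 1 ≤ jr)
    (hNlam : 1 ≤ Nr * lam ^ 2) (hN0 : 1 ≤ Nr) (hnN : Nr + 1 ≤ nr) :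
    2 * jr ≤ ((2 * nr - 1) * lam) ^ 2 / 2 := by
  have e1 : (2 * nr - 1) ≥ 2 * Nr + 1 := by linarith
  have e2 : (2 * Nr + 1) * lam ^ 2 ≥ 2 := by nlinarith
  have e3 : (2 * nr - 1) ≥ 2 * jr := by rw [hjc]; nlinarith
  have e5 : (2 * nr - 1) * lam ^ 2 ≥ (2 * Nr + 1) * lam ^ 2 := by nlinarith
  have e4 : ((2 * nr - 1) * lam) ^ 2 = (2 * nr - 1) * ((2 * nr - 1) * lam ^ 2) := by ring
  nlinarith

lemma final_numeric (Nr S₁ L lg : ℝ) (hS₁0 : 0 ≤ S₁) (hS₁1 : S₁ ≤ 1)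
    (hN100 : 100 ≤ Nr) (hL2 : 2 ≤ L) (hlog3 : Real.log 3 ≤ L)
    (hlogN : lg ≤ Real.log 3 + 2 * L) (hpos : (0:ℝ) < 2 * Nr + 2) :
    lg + (2 * S₁ + (2 * Nr + 2)⁻¹ * ((Nr + 1 + S₁) + ((Nr + 1 + S₁) - 1))) ≤ 5 * L := by
  have h1 : (2 * Nr + 2)⁻¹ * ((Nr + 1 + S₁) + ((Nr + 1 + S₁) - 1)) ≤ 2 := by
    rw [inv_mul_le_iff₀ hpos]
    nlinarith
  linarith

lemma log_ineq (Nr lami L : ℝ) (hNc : lami ^ 2 ≤ Nr) (hNup : Nr < lami ^ 2 + 1)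
    (hN100 : 100 ≤ Nr) (h10 : 10 ≤ lami) (hL : L = Real.log lami)
    (hpos : (0:ℝ) < 2 * Nr + 2) : Real.log (2 * Nr + 2) ≤ Real.log 3 + 2 * L := by
  have h1 : 2 * Nr + 2 ≤ 3 * lami ^ 2 := by nlinarith
  have h2 : Real.log (2 * Nr + 2) ≤ Real.log (3 * lami ^ 2) := Real.log_le_log hpos h1
  rw [Real.log_mul (by norm_num) (by nlinarith), Real.log_pow] at h2
  push_cast at h2
  rw [hL]
  linarith

lemma seqC (lam : ℝ) (hl : 0 < lam) (hl1 : lam ≤ 0.1) (p : ℤ → ℝ)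
    (h0 : ∀ z, 0 ≤ p z) (hsum : HasSum p 1)
    (ht : ∀ z : ℤ, z ≠ 0 → p z ≤ exp (-((2 * (z.natAbs : ℝ) - 1) * lam) ^ 2 / 2)) :
    ∑' z : ℤ, negMulLog (p z) ≤ 5 * Real.log lam⁻¹ := by
  have h10 : (10 : ℝ) ≤ lam⁻¹ := by
    rw [show (10:ℝ) = (10⁻¹)⁻¹ by norm_num]
    exact inv_anti₀ hl (by linarith)
  obtain ⟨N, hNc, hNup⟩ : ∃ N : ℕ, lam⁻¹ ^ 2 ≤ (N : ℝ) ∧ (N : ℝ) < lam⁻¹ ^ 2 + 1 :=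
    ⟨⌈lam⁻¹ ^ 2⌉₊, Nat.le_ceil _, by
      exact_mod_cast Nat.ceil_lt_add_one (show (0:ℝ) ≤ lam⁻¹ ^ 2 by positivity)⟩
  have hN100 : (100 : ℝ) ≤ (N : ℝ) := le_trans (by nlinarith) hNc
  have hNlam : 1 ≤ (N : ℝ) * lam ^ 2 := by
    have h1 : lam⁻¹ ^ 2 * lam ^ 2 = 1 := by field_simp
    nlinarith
  -- the geometric tail sum
  set S₁ : ℝ := exp (-1) * (1 - exp (-1))⁻¹ with hS₁def
  have he1 : exp (-1 : ℝ) ≤ 1/2 := by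
    rw [exp_neg]
    have h2 : (2:ℝ) ≤ exp 1 := by have := add_one_le_exp (1:ℝ); linarith
    rw [inv_le_comm₀ (exp_pos _) (by norm_num)]
    linarith
  have hS₁0 : 0 ≤ S₁ := by
    apply mul_nonneg (exp_pos _).le
    rw [inv_nonneg]
    linarith
  have hS₁1 : S₁ ≤ 1 := by
    rw [hS₁def]
    have h2 : (0:ℝ) < (1 - exp (-1))⁻¹ := by rw [inv_pos]; linarith
    calc exp (-1) * (1 - exp (-1))⁻¹ ≤ (1/2) * (1 - exp (-1))⁻¹ :=
          mul_le_mul_of_nonneg_right he1 h2.le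
    _ ≤ (1/2) * 2 := by
          apply mul_le_mul_of_nonneg_left _ (by norm_num)
          rw [inv_le_comm₀ (by linarith) (by norm_num)]
          linarith
    _ = 1 := by norm_num
  set u : ℕ → ℝ := fun m => if m ≤ N then 0 else exp (-((m - N : ℕ) : ℝ)) with hudef
  set v1 : ℕ → ℝ := fun m => if m ≤ N then 1 else 0 with hv1def
  have hu : HasSum u S₁ := by
    have hg : HasSum (fun j : ℕ => exp (-1) * exp (-1) ^ j) S₁ := by
      simpa [hS₁def, div_eq_mul_inv] using
        (hasSum_geometric_of_lt_one (exp_pos (-1)).le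
          (by rw [exp_lt_one_iff]; norm_num)).mul_left (exp (-1))
    have hshift : (fun j : ℕ => u (j + (N + 1))) = fun j : ℕ => exp (-1) * exp (-1) ^ j := by
      funext j
      have hj : ¬ (j + (N + 1) ≤ N) := by omega
      have hj2 : (j + (N + 1)) - N = j + 1 := by omega
      simp only [hudef, if_neg hj, hj2]
      rw [← exp_nat_mul, ← exp_add]
      push_cast
      ring_nf
    have := (hasSum_nat_add_iff (N + 1) (f := u)).mp (by rw [hshift]; exact hg)
    have hzero : ∑ i ∈ Finset.range (N + 1), u i = 0 := by
      apply Finset.sum_eq_zero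
      intro i hi
      have hiN : i ≤ N := Nat.lt_succ_iff.mp (Finset.mem_range.mp hi)
      simp [hudef, if_pos hiN]
    rw [hzero, add_zero] at this
    exact this
  have hv1 : HasSum v1 ((N : ℝ) + 1) := by
    have hfin : ∀ m ∉ Finset.range (N + 1), v1 m = 0 := by
      intro m hm
      have : ¬ m ≤ N := by
        simp only [Finset.mem_range] at hm; omega
      simp [hv1def, this]
    have : HasSum v1 (∑ b ∈ Finset.range (N + 1), v1 b) := hasSum_sum_of_ne_finset_zero hfin
    convert this using 1
    rw [Finset.sum_congr rfl (fun i hi => if_pos (Nat.lt_succ_iff.mp (Finset.mem_range.mp hi)))]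
    simp
  have hw : HasSum (fun m => v1 m + u m) (((N : ℝ) + 1) + S₁) := hv1.add hu
  have hwm : ∀ m : ℕ, exp (-((m - N : ℕ) : ℝ)) = v1 m + u m := by
    intro m
    by_cases h : m ≤ N
    · simp [hudef, hv1def, h, Nat.sub_eq_zero_of_le h]
    · simp [hudef, hv1def, h]
  have hNpos : (0:ℝ) < 2 * (N:ℝ) + 2 := by positivity
  -- summation over ℤ
  have hhZ : HasSum (fun z : ℤ => u z.natAbs) (S₁ + (S₁ - u 0)) := hasSum_int_natAbs hu
  have hu0 : u 0 = 0 := by simp [hudef]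
  rw [hu0, sub_zero] at hhZ
  have hwZ : HasSum (fun z : ℤ => v1 z.natAbs + u z.natAbs)
      ((((N : ℝ) + 1) + S₁) + ((((N : ℝ) + 1) + S₁) - (v1 0 + u 0))) := hasSum_int_natAbs hw
  have hv10 : v1 0 = 1 := by simp [hv1def]
  rw [hu0, hv10, add_zero] at hwZ
  have hqZ : HasSum (fun z : ℤ => (2 * (N:ℝ) + 2)⁻¹ * (v1 z.natAbs + u z.natAbs))
      ((2 * (N:ℝ) + 2)⁻¹ * ((((N : ℝ) + 1) + S₁) + ((((N : ℝ) + 1) + S₁) - 1))) :=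
    hwZ.mul_left _
  set G : ℤ → ℝ := fun z => p z * Real.log (2 * (N:ℝ) + 2) +
      (u z.natAbs + (2 * (N:ℝ) + 2)⁻¹ * (v1 z.natAbs + u z.natAbs)) with hGdef
  set T : ℝ := Real.log (2 * (N:ℝ) + 2) +
      (2 * S₁ + (2 * (N:ℝ) + 2)⁻¹ * ((((N : ℝ) + 1) + S₁) + ((((N : ℝ) + 1) + S₁) - 1))) with hTdef
  have hG : HasSum G T := by
    have h1 : HasSum (fun z : ℤ => p z * Real.log (2 * (N:ℝ) + 2)) (Real.log (2 * (N:ℝ) + 2)) := by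
      simpa using hsum.mul_right (Real.log (2 * (N:ℝ) + 2))
    have h2 : HasSum (fun z : ℤ => u z.natAbs + (2 * (N:ℝ) + 2)⁻¹ * (v1 z.natAbs + u z.natAbs))
        (2 * S₁ + (2 * (N:ℝ) + 2)⁻¹ * ((((N : ℝ) + 1) + S₁) + ((((N : ℝ) + 1) + S₁) - 1))) := by
      have := hhZ.add hqZ
      convert this using 2
      ring
    exact h1.add h2
  -- termwise bound
  have hterm : ∀ z : ℤ, negMulLog (p z) ≤ G z := by
    intro z
    set n := z.natAbs with hndef
    set j : ℕ := n - N with hjdef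
    have hq0 : (0:ℝ) < (2 * (N:ℝ) + 2)⁻¹ * exp (-(j:ℝ)) := by positivity
    have hgibbs := negMulLog_le_gibbs (h0 z) hq0
    have hlogq : Real.log (((2 * (N:ℝ) + 2)⁻¹ * exp (-(j:ℝ)))⁻¹)
        = Real.log (2 * (N:ℝ) + 2) + (j:ℝ) := by
      rw [mul_inv, inv_inv, ← exp_neg, neg_neg,
        Real.log_mul (ne_of_gt hNpos) (exp_pos _).ne', Real.log_exp]
    rw [hlogq] at hgibbs
    have hpj : p z * (j:ℝ) ≤ u n := by
      by_cases hn : n ≤ N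
      · have : j = 0 := by omega
        simp [this, hudef, if_pos hn]
      · -- tail case
        have hz0 : z ≠ 0 := by
          intro h
          apply hn
          simp [hndef, h]
        have hNn : N < n := Nat.lt_of_not_le hn
        have hjc : (j:ℝ) = (n:ℝ) - (N:ℝ) := by
          rw [hjdef]
          push_cast [Nat.cast_sub hNn.le]
          ring
        have hj1 : (1:ℝ) ≤ (j:ℝ) := by
          have : 1 ≤ j := by omega
          exact_mod_cast this
        have hnN : (N:ℝ) + 1 ≤ (n:ℝ) := by exact_mod_cast hNn
        -- p z ≤ exp (-2j)
        have hexp : 2 * (j:ℝ) ≤ ((2 * (n:ℝ) - 1) * lam) ^ 2 / 2 :=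
          gauss_key (n:ℝ) (N:ℝ) lam (j:ℝ) hjc hj1 (by linarith) (by linarith) hnN
        have hp2j : p z ≤ exp (-(2 * (j:ℝ))) := by
          refine (ht z hz0).trans ?_
          apply exp_le_exp.mpr
          rw [← hndef]
          linarith
        have hje : (j:ℝ) * exp (-(j:ℝ)) ≤ 1 := by
          have := add_one_le_exp (j:ℝ)
          rw [exp_neg]
          rw [mul_inv_le_iff₀ (exp_pos _)]
          linarith
        calc p z * (j:ℝ) ≤ exp (-(2 * (j:ℝ))) * (j:ℝ) := by
              apply mul_le_mul_of_nonneg_right hp2j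
              linarith
        _ = ((j:ℝ) * exp (-(j:ℝ))) * exp (-(j:ℝ)) := by
              rw [show -(2*(j:ℝ)) = (-(j:ℝ)) + (-(j:ℝ)) by ring, Real.exp_add]; ring
        _ ≤ 1 * exp (-(j:ℝ)) := mul_le_mul_of_nonneg_right hje (exp_pos _).le
        _ = exp (-(j:ℝ)) := one_mul _
        _ = u n := by simp [hudef, if_neg hn]; exact hjdef
    have hqw : (2 * (N:ℝ) + 2)⁻¹ * exp (-(j:ℝ)) = (2 * (N:ℝ) + 2)⁻¹ * (v1 n + u n) := by
      rw [← hwm n]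
    calc negMulLog (p z)
        ≤ p z * (Real.log (2 * (N:ℝ) + 2) + (j:ℝ)) + (2 * (N:ℝ) + 2)⁻¹ * exp (-(j:ℝ)) := hgibbs
    _ = p z * Real.log (2 * (N:ℝ) + 2) + p z * (j:ℝ) + (2 * (N:ℝ) + 2)⁻¹ * exp (-(j:ℝ)) := by ring
    _ ≤ p z * Real.log (2 * (N:ℝ) + 2) + u n + (2 * (N:ℝ) + 2)⁻¹ * (v1 n + u n) := by
          rw [hqw]
          linarith
    _ = G z := by rw [hGdef]; ring
  -- sum the bound
  have hnn : ∀ z : ℤ, 0 ≤ negMulLog (p z) := by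
    intro z
    apply negMulLog_nonneg (h0 z)
    have := hsum.tsum_eq
    have hle := Summable.le_tsum hsum.summable z (fun w _ => h0 w)
    rw [hsum.tsum_eq] at hle
    exact hle
  have hFs : Summable (fun z : ℤ => negMulLog (p z)) :=
    Summable.of_nonneg_of_le hnn hterm hG.summable
  have hmain := Summable.tsum_le_tsum hterm hFs hG.summable
  rw [hG.tsum_eq] at hmain
  refine hmain.trans ?_
  -- numeric: T ≤ 5 log lam⁻¹
  set L := Real.log lam⁻¹ with hLdef
  have hL2 : (2:ℝ) ≤ L := by
    have hexp2 : exp 2 < 10 := by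
      have h1 : exp 2 = exp 1 * exp 1 := by rw [← exp_add]; norm_num
      have := exp_one_lt_d9
      nlinarith [Real.exp_pos 1]
    have h2 : (2:ℝ) < Real.log 10 := by
      have := Real.log_exp (2:ℝ)
      calc (2:ℝ) = Real.log (exp 2) := this.symm
      _ < Real.log 10 := Real.log_lt_log (exp_pos _) hexp2
    have h3 : Real.log 10 ≤ L := Real.log_le_log (by norm_num) h10
    linarith
  have hlog3 : Real.log 3 ≤ L := Real.log_le_log (by norm_num) (by linarith)
  have hlogN : Real.log (2 * (N:ℝ) + 2) ≤ Real.log 3 + 2 * L :=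
    log_ineq (N:ℝ) lam⁻¹ L hNc hNup hN100 h10 hLdef hNpos
  rw [hTdef]
  calc Real.log (2 * (N:ℝ) + 2) +
      (2 * S₁ + (2 * (N:ℝ) + 2)⁻¹ * ((((N : ℝ) + 1) + S₁) + ((((N : ℝ) + 1) + S₁) - 1)))
      ≤ 5 * L := final_numeric (N:ℝ) S₁ L _ hS₁0 hS₁1 hN100 hL2 hlog3 hlogN hNpos

lemma numA (lam S : ℝ) (h10 : 10 ≤ lam)
    (hS : S ≤ 2 * exp (-lam ^ 2 / 2) + 4 * exp (-lam ^ 2 / 4) / (1 - exp (-lam ^ 2 / 2))) :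
    S / Real.log 2 ≤ 2000 * exp (-lam ^ 2 / 9) := by
  have hlog2 := Real.log_two_gt_d9
  have h1 : exp (-lam ^ 2 / 2) ≤ exp (-lam ^ 2 / 9) := exp_le_exp.mpr (by nlinarith)
  have h2 : exp (-lam ^ 2 / 4) ≤ exp (-lam ^ 2 / 9) := exp_le_exp.mpr (by nlinarith)
  have he : (2:ℝ) ≤ exp 1 := by have := add_one_le_exp (1:ℝ); linarith
  have h3 : exp (-lam ^ 2 / 2) ≤ 1 / 2 := by
    have ha : exp (-lam ^ 2 / 2) ≤ exp (-1 : ℝ) := exp_le_exp.mpr (by nlinarith)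
    have hb : exp (-1 : ℝ) ≤ 1 / 2 := by
      rw [exp_neg]
      rw [inv_le_comm₀ (exp_pos _) (by norm_num)]
      norm_num
      linarith
    linarith
  have hr : (1:ℝ) / 2 ≤ 1 - exp (-lam ^ 2 / 2) := by linarith
  have h5 : 4 * exp (-lam ^ 2 / 4) / (1 - exp (-lam ^ 2 / 2)) ≤ 8 * exp (-lam ^ 2 / 4) := by
    rw [div_le_iff₀ (by linarith)]
    nlinarith [exp_pos (-lam ^ 2 / 4)]
  have hE := exp_pos (-lam ^ 2 / 9)
  rw [div_le_iff₀ (by linarith : (0:ℝ) < Real.log 2)]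
  nlinarith [hE, h1, h2, h5, hS]

lemma numB (lam S : ℝ) (hl : 0.1 < lam)
    (hS : S ≤ 2 * exp (-lam ^ 2 / 2) + 4 * exp (-lam ^ 2 / 4) / (1 - exp (-lam ^ 2 / 2))) :
    S / Real.log 2 ≤ 2000 := by
  have hlog2 := Real.log_two_gt_d9
  have h2 : (1.005:ℝ) ≤ exp 0.005 := by have := add_one_le_exp (0.005:ℝ); linarith
  have h3 : exp (-(0.005:ℝ)) ≤ 0.996 := by
    rw [exp_neg]
    rw [inv_le_comm₀ (exp_pos _) (by norm_num)]
    calc (0.996:ℝ)⁻¹ ≤ 1.005 := by norm_num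
    _ ≤ exp 0.005 := h2
  have h1 : exp (-lam ^ 2 / 2) ≤ exp (-(0.005:ℝ)) := exp_le_exp.mpr (by nlinarith)
  have hr : (0.004:ℝ) ≤ 1 - exp (-lam ^ 2 / 2) := by linarith
  have h5 : 4 * exp (-lam ^ 2 / 4) / (1 - exp (-lam ^ 2 / 2)) ≤ 4 / 0.004 := by
    apply div_le_div₀ (by norm_num) _ (by norm_num) hr
    nlinarith [exp_le_one_iff.mpr (show -lam ^ 2 / 4 ≤ 0 by nlinarith)]
  have h6 : exp (-lam ^ 2 / 2) ≤ 1 := exp_le_one_iff.mpr (by nlinarith)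
  rw [div_le_iff₀ (by linarith : (0:ℝ) < Real.log 2)]
  nlinarith [hS, h5, h6, exp_pos (-lam ^ 2 / 2)]

end Helpers

open Real in
/-- **Entropy of a rounded subgaussian random variable (Lemma 12 in Matousek '96).** -/
theorem entropy_tail_bound :
    ∃ C₀ : ℝ, 0 < C₀ ∧
    ∀ (Ω : Type) [MeasurableSpace Ω] (μ : Measure Ω), IsProbabilityMeasure μ →
    ∀ E : Ω → ℝ, Measurable E →
    ∀ M : ℝ, 0 < M →
      (∀ α : ℝ, 0 < α →
        μ {ω | α * M ≤ E ω} ≤ ENNReal.ofReal (Real.exp (-α ^ 2 / 2)) ∧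
        μ {ω | E ω ≤ -(α * M)} ≤ ENNReal.ofReal (Real.exp (-α ^ 2 / 2))) →
    ∀ lam : ℝ, 0 < lam →
      intEntropy μ (fun ω => round (E ω / (2 * lam * M))) ≤
        (if 10 ≤ lam then C₀ * Real.exp (-lam ^ 2 / 9)
         else if lam ≤ 0.1 then -(C₀ * Real.logb 2 lam)
         else C₀) := by
  refine ⟨2000, by norm_num, ?_⟩
  intro Ω _ μ hμ E hE M hM htail lam hlam
  have hΔ0 : 0 < 2 * lam * M := by positivity
  set Δ := 2 * lam * M with hΔ
  set X : Ω → ℤ := fun ω => round (E ω / Δ) with hX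
  have hXm : Measurable X := by
    have hfe : X = fun ω => ⌊E ω / Δ + 1/2⌋ := by
      funext ω; rw [hX]; exact round_eq _
    rw [hfe]
    exact Measurable.floor ((hE.div_const _).add_const _)
  set p : ℤ → ℝ := fun z => (μ (X ⁻¹' {z})).toReal with hp
  have hfin : ∀ s : Set Ω, μ s ≠ ⊤ := fun s => (measure_lt_top μ s).ne
  have h0 : ∀ z, 0 ≤ p z := fun z => ENNReal.toReal_nonneg
  have h1 : ∀ z, p z ≤ 1 := by
    intro z
    have := prob_le_one (μ := μ) (s := X ⁻¹' {z})
    calc p z ≤ (1 : ENNReal).toReal := ENNReal.toReal_mono (by simp) this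
    _ = 1 := by simp
  have hHasSum : HasSum p 1 := by
    have hdisj : Pairwise (Function.onFun Disjoint fun z : ℤ => X ⁻¹' {z}) := by
      intro i j hij
      apply Set.disjoint_left.mpr
      intro ω hi hj
      simp only [Set.mem_preimage, Set.mem_singleton_iff] at hi hj
      exact hij (by rw [← hi, ← hj])
    have hmeas : ∀ z : ℤ, MeasurableSet (X ⁻¹' {z}) := fun z => hXm (measurableSet_singleton z)
    have hunion : (⋃ z : ℤ, X ⁻¹' {z}) = Set.univ := by
      ext ω; simp
    have hsum' : ∑' z : ℤ, μ (X ⁻¹' {z}) = 1 := by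
      rw [← measure_iUnion hdisj hmeas, hunion, measure_univ]
    have hsummable : Summable p := by
      apply ENNReal.summable_toReal
      rw [hsum']; exact ENNReal.one_ne_top
    have htr : ∑' z, p z = 1 := by
      rw [hp, ← ENNReal.tsum_toReal_eq (fun z => hfin _), hsum']
      simp
    rw [← htr]
    exact hsummable.hasSum
  have ht : ∀ z : ℤ, z ≠ 0 → p z ≤ exp (-((2 * (z.natAbs : ℝ) - 1) * lam) ^ 2 / 2) := by
    intro z hz
    set α := (2 * (z.natAbs : ℝ) - 1) * lam with hα
    have hn1 : 1 ≤ z.natAbs := Int.natAbs_pos.mpr hz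
    have hn1' : (1:ℝ) ≤ (z.natAbs : ℝ) := by exact_mod_cast hn1
    have hα0 : 0 < α := by nlinarith
    obtain ⟨hup, hdown⟩ := htail α hα0
    rcases lt_or_gt_of_ne hz with hneg | hpos
    · -- z < 0 : use lower tail
      have hzn : (z:ℝ) = -(z.natAbs : ℝ) := by
        rw [Nat.cast_natAbs, abs_of_neg hneg]
        push_cast
        ring
      have hsub : X ⁻¹' {z} ⊆ {ω | E ω ≤ -(α * M)} := by
        intro ω hω
        simp only [Set.mem_preimage, Set.mem_singleton_iff, hX] at hω
        have h2 : E ω / Δ + 1/2 < (z:ℝ) + 1 := by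
          rw [round_eq] at hω
          calc E ω / Δ + 1/2 < (⌊E ω / Δ + 1/2⌋ : ℝ) + 1 := Int.lt_floor_add_one _
          _ = (z:ℝ) + 1 := by rw [hω]
        have h3 : E ω < ((z:ℝ) + 1/2) * Δ := by
          rw [← div_lt_iff₀ hΔ0]
          linarith
        have h4 : ((z:ℝ) + 1/2) * Δ = -(α * M) := by
          rw [hα, hΔ, hzn]; ring
        show E ω ≤ -(α * M)
        linarith [h3, h4.le]
      calc p z ≤ (ENNReal.ofReal (exp (-α ^ 2 / 2))).toReal :=
            ENNReal.toReal_mono (by simp) (le_trans (measure_mono hsub) hdown)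
      _ = exp (-α ^ 2 / 2) := ENNReal.toReal_ofReal (exp_pos _).le
    · -- z > 0 : use upper tail
      have hzn : (z:ℝ) = (z.natAbs : ℝ) := by
        rw [Nat.cast_natAbs, abs_of_pos hpos]
      have hsub : X ⁻¹' {z} ⊆ {ω | α * M ≤ E ω} := by
        intro ω hω
        simp only [Set.mem_preimage, Set.mem_singleton_iff, hX] at hω
        have h2 : (z:ℝ) ≤ E ω / Δ + 1/2 := by
          rw [round_eq] at hω
          calc (z:ℝ) = (⌊E ω / Δ + 1/2⌋ : ℝ) := by rw [hω]
          _ ≤ E ω / Δ + 1/2 := Int.floor_le _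
        have h3 : ((z:ℝ) - 1/2) * Δ ≤ E ω := by
          rw [← le_div_iff₀ hΔ0]
          linarith
        have h4 : ((z:ℝ) - 1/2) * Δ = α * M := by
          rw [hα, hΔ, hzn]; ring
        show α * M ≤ E ω
        linarith [h3, h4.ge]
      calc p z ≤ (ENNReal.ofReal (exp (-α ^ 2 / 2))).toReal :=
            ENNReal.toReal_mono (by simp) (le_trans (measure_mono hsub) hup)
      _ = exp (-α ^ 2 / 2) := ENNReal.toReal_ofReal (exp_pos _).le
  have hp0 : 1 - p 0 ≤ 2 * exp (-lam ^ 2 / 2) := by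
    obtain ⟨hup, hdown⟩ := htail lam hlam
    have hsub : (X ⁻¹' {0})ᶜ ⊆ {ω | lam * M ≤ E ω} ∪ {ω | E ω ≤ -(lam * M)} := by
      intro ω hω
      simp only [Set.mem_compl_iff, Set.mem_preimage, Set.mem_singleton_iff, hX] at hω
      by_cases hc : lam * M ≤ E ω
      · left; exact hc
      · right
        show E ω ≤ -(lam * M)
        by_contra hc2
        apply hω
        push_neg at hc hc2
        have hd1 : E ω / Δ < 1/2 := by
          rw [div_lt_iff₀ hΔ0]; rw [hΔ]; nlinarith
        have hd2 : -(1/2 : ℝ) ≤ E ω / Δ := by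
          rw [le_div_iff₀ hΔ0]; rw [hΔ]; nlinarith
        rw [round_eq, Int.floor_eq_zero_iff]
        constructor <;> simp <;> linarith
    have hcompl : μ ((X ⁻¹' {0})ᶜ) ≤ ENNReal.ofReal (2 * exp (-lam ^ 2 / 2)) := by
      calc μ ((X ⁻¹' {0})ᶜ) ≤ μ ({ω | lam * M ≤ E ω} ∪ {ω | E ω ≤ -(lam * M)}) :=
            measure_mono hsub
      _ ≤ μ {ω | lam * M ≤ E ω} + μ {ω | E ω ≤ -(lam * M)} := measure_union_le _ _
      _ ≤ ENNReal.ofReal (exp (-lam ^ 2 / 2)) + ENNReal.ofReal (exp (-lam ^ 2 / 2)) :=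
            add_le_add hup hdown
      _ = ENNReal.ofReal (2 * exp (-lam ^ 2 / 2)) := by
            rw [← ENNReal.ofReal_add (exp_pos _).le (exp_pos _).le]
            ring_nf
    have h2 : (μ ((X ⁻¹' {0})ᶜ)).toReal ≤ 2 * exp (-lam ^ 2 / 2) :=
      ENNReal.toReal_le_of_le_ofReal (by positivity) hcompl
    have hc : p 0 + (μ ((X ⁻¹' {0})ᶜ)).toReal = 1 := by
      rw [hp, ← ENNReal.toReal_add (hfin _) (hfin _),
        measure_add_measure_compl (hXm (measurableSet_singleton 0))]
      simp
    linarith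
  have hent : intEntropy μ X = (∑' z, negMulLog (p z)) / Real.log 2 := by
    rw [intEntropy, ← tsum_neg, ← tsum_div_const]
    congr 1
    funext z
    rw [hp, Real.logb, negMulLog]
    ring
  have hgoal : intEntropy μ (fun ω => round (E ω / (2 * lam * M))) = intEntropy μ X := rfl
  rw [hgoal, hent]
  have hlog2 : (0:ℝ) < Real.log 2 := Real.log_pos (by norm_num)
  split_ifs with hA hC
  · exact numA lam _ hA (seqAB lam hlam p h0 h1 hp0 ht)
  · -- lam ≤ 0.1
    have hS := seqC lam hlam hC p h0 hHasSum ht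
    have hLnn : 0 ≤ Real.log lam⁻¹ := by
      apply Real.log_nonneg
      have hl1 : lam ≤ 1 := by linarith [hC]
      calc (1:ℝ) = 1⁻¹ := by norm_num
      _ ≤ lam⁻¹ := inv_anti₀ hlam hl1
    have heq : -(2000 * Real.logb 2 lam) = (2000 * Real.log lam⁻¹) / Real.log 2 := by
      rw [Real.logb, Real.log_inv]
      ring
    rw [heq]
    gcongr
    linarith
  · push_neg at hA hC
    exact numB lam _ hC (seqAB lam hlam p h0 h1 hp0 ht)

end
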